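/- arXiv:2504.17348 — 8 statements merged into one kernel-verified Lean document; each statement's English description precedes it below -/
import Mathlib

section
/- Let F be an algebraically closed field, let A be an n×n matrix over F, and let d be the degree of the minimal polynomial of A. If 2d > n, then there exists a polynomial p ∈ F[X] of degree at most d − 1 such that the matrix p(A) has rank exactly 1. -/
open Polynomial Matrix

section Helpers

open Module


variable {F V : Type*} [Field F] [AddCommGroup V] [Module F V] [FiniteDimensional F V]

lemma rank_step (N g : V →ₗ[F] V) :
    finrank F (LinearMap.range (N ∘ₗ g)) +
      finrank F ((LinearMap.ker N ⊓ LinearMap.range g : Submodule F V)) =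
      finrank F (LinearMap.range g) := by
  have h1 := LinearMap.finrank_range_add_finrank_ker (N.domRestrict (LinearMap.range g))
  rw [LinearMap.range_domRestrict] at h1
  have hker : LinearMap.ker (N.domRestrict (LinearMap.range g)) ≃ₗ[F]
      (LinearMap.ker N ⊓ LinearMap.range g : Submodule F V) := by
    have : LinearMap.ker (N.domRestrict (LinearMap.range g)) =
        Submodule.comap (LinearMap.range g).subtype (LinearMap.ker N ⊓ LinearMap.range g) := by
      ext x; simp [LinearMap.mem_ker, LinearMap.domRestrict_apply]
    rw [this]
    exact Submodule.comapSubtypeEquivOfLe inf_le_right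
  rw [hker.finrank_eq] at h1
  rw [LinearMap.range_comp]
  exact h1

lemma chain (N B : Module.End F V) (hcomm : ∀ j : ℕ, B * N ^ j = N ^ j * B)
    (e : ℕ) (he : 1 ≤ e) (hNB : N ^ e * B = 0) :
    e * finrank F (LinearMap.range (N ^ (e - 1) * B)) ≤
      finrank F (LinearMap.range B) := by
  have hre : finrank F (LinearMap.range (N ^ e * B)) = 0 := by
    rw [hNB, LinearMap.range_zero]; exact finrank_bot F V
  have hstep : ∀ j : ℕ, finrank F (LinearMap.range (N ^ j * B)) =
      finrank F (LinearMap.range (N ^ (j + 1) * B)) +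
      finrank F ((LinearMap.ker N ⊓ LinearMap.range (N ^ j * B) : Submodule F V)) := by
    intro j
    have h2 := rank_step N (N ^ j * B)
    rw [← Module.End.mul_eq_comp, ← mul_assoc, ← pow_succ'] at h2
    omega
  have hmono : ∀ j k : ℕ, j ≤ k →
      finrank F ((LinearMap.ker N ⊓ LinearMap.range (N ^ k * B) : Submodule F V)) ≤
      finrank F ((LinearMap.ker N ⊓ LinearMap.range (N ^ j * B) : Submodule F V)) := by
    intro j k hjk
    have hle : LinearMap.range (N ^ k * B) ≤ LinearMap.range (N ^ j * B) := by
      have heq : N ^ k * B = (N ^ j * B) * N ^ (k - j) := by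
        rw [mul_assoc, hcomm, ← mul_assoc, ← pow_add]
        congr 2
        omega
      rw [heq, Module.End.mul_eq_comp]
      exact LinearMap.range_comp_le_range _ _
    exact Submodule.finrank_mono (inf_le_inf_left _ hle)
  have hce : finrank F ((LinearMap.ker N ⊓ LinearMap.range (N ^ (e - 1) * B) : Submodule F V)) =
      finrank F (LinearMap.range (N ^ (e - 1) * B)) := by
    have h2 := hstep (e - 1)
    rw [Nat.sub_add_cancel he, hre] at h2
    omega
  have hlow : ∀ i, i ≤ e → i * finrank F (LinearMap.range (N ^ (e - 1) * B)) ≤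
      finrank F (LinearMap.range (N ^ (e - i) * B)) := by
    intro i
    induction i with
    | zero => simp
    | succ i ih =>
      intro hie
      have h2 := hstep (e - i - 1)
      have h3 : e - i - 1 + 1 = e - i := by omega
      rw [h3] at h2
      have h4 := hmono (e - i - 1) (e - 1) (by omega)
      rw [hce] at h4
      have h5 := ih (by omega)
      have h6 : e - (i + 1) = e - i - 1 := by omega
      rw [h6]
      have h7 : (i + 1) * finrank F (LinearMap.range (N ^ (e - 1) * B)) =
          i * finrank F (LinearMap.range (N ^ (e - 1) * B)) +
          finrank F (LinearMap.range (N ^ (e - 1) * B)) := by ring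
      omega
  have h8 := hlow e le_rfl
  rw [Nat.sub_self, pow_zero, one_mul] at h8
  exact h8

lemma per_root (F : Type*) [Field F] {V : Type*} [AddCommGroup V] [Module F V]
    [FiniteDimensional F V] (f : Module.End F V) (μ : F) (e : ℕ) (he : 1 ≤ e)
    (q' : F[X]) (hq'0 : q' ≠ 0) (hfact : minpoly F f = (X - C μ) ^ e * q') :
    1 ≤ finrank F (LinearMap.range (aeval f ((X - C μ) ^ (e - 1) * q'))) ∧
    ((X - C μ) ^ (e - 1) * q').natDegree = (minpoly F f).natDegree - 1 ∧
    1 ≤ (minpoly F f).natDegree ∧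
    e * finrank F (LinearMap.range (aeval f ((X - C μ) ^ (e - 1) * q'))) ≤
      finrank F ↥(f.maxGenEigenspace μ) := by
  have hmonic : ((X - C μ) ^ e).Monic := (monic_X_sub_C μ).pow e
  have hdeg : (minpoly F f).natDegree = e + q'.natDegree := by
    rw [hfact, natDegree_mul hmonic.ne_zero hq'0, natDegree_pow, natDegree_X_sub_C, mul_one]
  have hP0 : ((X - C μ) ^ (e - 1) * q') ≠ 0 :=
    mul_ne_zero (pow_ne_zero _ (X_sub_C_ne_zero μ)) hq'0
  have hPdeg : ((X - C μ) ^ (e - 1) * q').natDegree = (minpoly F f).natDegree - 1 := by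
    rw [natDegree_mul (pow_ne_zero _ (X_sub_C_ne_zero μ)) hq'0, natDegree_pow,
      natDegree_X_sub_C, mul_one, hdeg]
    omega
  have hNB : (aeval f (X - C μ)) ^ e * (aeval f q') = 0 := by
    rw [← _root_.map_pow, ← _root_.map_mul, ← hfact, minpoly.aeval]
  have hcomm : ∀ j : ℕ, (aeval f q') * (aeval f (X - C μ)) ^ j =
      (aeval f (X - C μ)) ^ j * (aeval f q') := by
    intro j
    rw [← _root_.map_pow, ← _root_.map_mul, ← _root_.map_mul, mul_comm]
  have hmul : aeval f ((X - C μ) ^ (e - 1) * q') =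
      (aeval f (X - C μ)) ^ (e - 1) * (aeval f q') := by
    rw [_root_.map_mul, _root_.map_pow]
  have hchain := chain (aeval f (X - C μ)) (aeval f q') hcomm e he hNB
  have hWle : LinearMap.range (aeval f q') ≤ f.maxGenEigenspace μ := by
    rintro x ⟨y, rfl⟩
    rw [Module.End.mem_maxGenEigenspace]
    refine ⟨e, ?_⟩
    have hNeq : f - μ • (1 : Module.End F V) = aeval f (X - C μ) := by
      rw [_root_.map_sub, aeval_X, aeval_C, Module.algebraMap_end_eq_smul_id]
      rfl
    rw [hNeq]
    have : ((aeval f (X - C μ)) ^ e) ((aeval f q') y) =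
        ((aeval f (X - C μ)) ^ e * (aeval f q')) y := rfl
    rw [this, hNB]
    rfl
  have hK1 : 1 ≤ finrank F (LinearMap.range (aeval f ((X - C μ) ^ (e - 1) * q'))) := by
    by_contra h0
    have h00 : finrank F (LinearMap.range (aeval f ((X - C μ) ^ (e - 1) * q'))) = 0 := by omega
    rw [Submodule.finrank_eq_zero] at h00
    have haev : aeval f ((X - C μ) ^ (e - 1) * q') = 0 := LinearMap.range_eq_bot.mp h00
    have hdvd2 : minpoly F f ∣ (X - C μ) ^ (e - 1) * q' := minpoly.dvd F f haev
    have h9 := natDegree_le_of_dvd hdvd2 hP0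
    rw [hPdeg] at h9
    omega
  refine ⟨hK1, hPdeg, by omega, ?_⟩
  rw [hmul]
  calc e * finrank F (LinearMap.range ((aeval f (X - C μ)) ^ (e - 1) * (aeval f q'))) ≤
      finrank F (LinearMap.range (aeval f q')) := hchain
  _ ≤ finrank F ↥(f.maxGenEigenspace μ) := Submodule.finrank_mono hWle

lemma sum_finrank_le_of_supIndep {ι : Type*} [DecidableEq ι] (W : ι → Submodule F V)
    (s : Finset ι) (h : s.SupIndep W) :
    ∑ i ∈ s, finrank F (W i) ≤ finrank F V := by
  have key : ∑ i ∈ s, finrank F (W i) = finrank F ↥(s.sup W) := by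
    induction s using Finset.induction_on with
    | empty => simp; exact (finrank_bot F V).symm
    | @insert a s ha ih =>
      rw [Finset.sum_insert ha, Finset.sup_insert,
        ih (h.subset (Finset.subset_insert a s))]
      have hdisj : Disjoint (W a) (s.sup W) :=
        h (Finset.subset_insert a s) (Finset.mem_insert_self a s) ha
      have := Submodule.finrank_sup_add_finrank_inf_eq (W a) (s.sup W)
      rw [hdisj.eq_bot, finrank_bot] at this
      omega
  rw [key]
  exact Submodule.finrank_le _

lemma key_end (F : Type*) [Field F] [IsAlgClosed F] (V : Type*) [AddCommGroup V] [Module F V]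
    [FiniteDimensional F V] (f : Module.End F V) (d : ℕ)
    (hd : (minpoly F f).natDegree = d) (h : 2 * d > finrank F V) :
    ∃ p : F[X], p.natDegree ≤ d - 1 ∧ finrank F (LinearMap.range (aeval f p)) = 1 := by
  classical
  by_cases hm0 : minpoly F f = 0
  · rw [hm0, natDegree_zero] at hd; omega
  have hsplit : Splits (minpoly F f) := IsAlgClosed.splits _
  have hcard : ((minpoly F f).roots).card = d := by
    rw [← hd]; exact splits_iff_card_roots.mp hsplit
  have main : ∀ μ ∈ (minpoly F f).roots.toFinset,
      1 ≤ finrank F (LinearMap.range (aeval f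
        ((X - C μ) ^ ((minpoly F f).roots.count μ - 1) *
          (minpoly F f /ₘ (X - C μ) ^ ((minpoly F f).roots.count μ))))) ∧
      ((X - C μ) ^ ((minpoly F f).roots.count μ - 1) *
          (minpoly F f /ₘ (X - C μ) ^ ((minpoly F f).roots.count μ))).natDegree = d - 1 ∧
      ((minpoly F f).roots.count μ) * finrank F (LinearMap.range (aeval f
        ((X - C μ) ^ ((minpoly F f).roots.count μ - 1) *
          (minpoly F f /ₘ (X - C μ) ^ ((minpoly F f).roots.count μ))))) ≤
        finrank F ↥(f.maxGenEigenspace μ) := by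
    intro μ hμ
    have he : 1 ≤ (minpoly F f).roots.count μ := by
      rw [Multiset.one_le_count_iff_mem]
      exact Multiset.mem_toFinset.mp hμ
    have hdvd : (X - C μ) ^ ((minpoly F f).roots.count μ) ∣ minpoly F f := by
      rw [count_roots]; exact pow_rootMultiplicity_dvd _ μ
    have hmonic : ((X - C μ) ^ ((minpoly F f).roots.count μ)).Monic :=
      (monic_X_sub_C μ).pow _
    have hfact : minpoly F f = (X - C μ) ^ ((minpoly F f).roots.count μ) *
        (minpoly F f /ₘ (X - C μ) ^ ((minpoly F f).roots.count μ)) := by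
      have h2 := modByMonic_add_div (minpoly F f) ((X - C μ) ^ ((minpoly F f).roots.count μ))
      rwa [(modByMonic_eq_zero_iff_dvd hmonic).mpr hdvd, zero_add, eq_comm] at h2
    have hq'0 : minpoly F f /ₘ (X - C μ) ^ ((minpoly F f).roots.count μ) ≠ 0 := by
      intro h0; rw [h0, mul_zero] at hfact; exact hm0 hfact
    obtain ⟨h1, h2, _, h4⟩ := per_root F f μ _ he _ hq'0 hfact
    exact ⟨h1, by rwa [hd] at h2, h4⟩
  have hsumd : ∑ μ ∈ (minpoly F f).roots.toFinset, (minpoly F f).roots.count μ = d := by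
    rw [Multiset.toFinset_sum_count_eq, hcard]
  have hsup : ((minpoly F f).roots.toFinset).SupIndep fun μ => f.maxGenEigenspace μ :=
    (f.independent_maxGenEigenspace).supIndep' _
  have hsum1 : ∑ μ ∈ (minpoly F f).roots.toFinset, finrank F ↥(f.maxGenEigenspace μ) ≤
      finrank F V := sum_finrank_le_of_supIndep _ _ hsup
  have hex : ∃ μ ∈ (minpoly F f).roots.toFinset,
      finrank F (LinearMap.range (aeval f
        ((X - C μ) ^ ((minpoly F f).roots.count μ - 1) *
          (minpoly F f /ₘ (X - C μ) ^ ((minpoly F f).roots.count μ))))) = 1 := by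
    by_contra hcon
    push_neg at hcon
    have h3 : ∑ μ ∈ (minpoly F f).roots.toFinset, 2 * (minpoly F f).roots.count μ ≤
        ∑ μ ∈ (minpoly F f).roots.toFinset, ((minpoly F f).roots.count μ) *
          finrank F (LinearMap.range (aeval f
            ((X - C μ) ^ ((minpoly F f).roots.count μ - 1) *
              (minpoly F f /ₘ (X - C μ) ^ ((minpoly F f).roots.count μ))))) := by
      refine Finset.sum_le_sum ?_
      intro μ hμ
      obtain ⟨h1', _, _⟩ := main μ hμ
      have h2' := hcon μ hμ
      have : 2 ≤ finrank F (LinearMap.range (aeval f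
        ((X - C μ) ^ ((minpoly F f).roots.count μ - 1) *
          (minpoly F f /ₘ (X - C μ) ^ ((minpoly F f).roots.count μ))))) := by omega
      calc 2 * (minpoly F f).roots.count μ = (minpoly F f).roots.count μ * 2 := by ring
      _ ≤ _ := Nat.mul_le_mul_left _ this
    have h4 : ∑ μ ∈ (minpoly F f).roots.toFinset, ((minpoly F f).roots.count μ) *
          finrank F (LinearMap.range (aeval f
            ((X - C μ) ^ ((minpoly F f).roots.count μ - 1) *
              (minpoly F f /ₘ (X - C μ) ^ ((minpoly F f).roots.count μ))))) ≤
        ∑ μ ∈ (minpoly F f).roots.toFinset, finrank F ↥(f.maxGenEigenspace μ) :=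
      Finset.sum_le_sum fun μ hμ => (main μ hμ).2.2
    rw [← Finset.mul_sum, hsumd] at h3
    omega
  obtain ⟨μ, hμ, hKμ⟩ := hex
  exact ⟨_, le_of_eq (main μ hμ).2.1, hKμ⟩

end Helpers

open Module

theorem exists_poly_rank_one_of_minpoly_deg_gt_half
    (F : Type*) [Field F] [IsAlgClosed F] (n : ℕ)
    (A : Matrix (Fin n) (Fin n) F) (d : ℕ)
    (hd : (minpoly F A).natDegree = d) (h : 2 * d > n) :
    ∃ p : F[X], p.natDegree ≤ d - 1 ∧ Matrix.rank (Polynomial.aeval A p) = 1 := by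
  classical
  set f : Module.End F (Fin n → F) := Matrix.toLinAlgEquiv' A with hf
  have hmin : minpoly F f = minpoly F A := minpoly.algEquiv_eq Matrix.toLinAlgEquiv' A
  have hfin : finrank F (Fin n → F) = n := by simp
  obtain ⟨p, hp1, hp2⟩ := key_end F (Fin n → F) f d (by rw [hmin, hd])
    (by rw [hfin]; exact h)
  refine ⟨p, hp1, ?_⟩
  have hcomm : (aeval A p).mulVecLin = aeval f p := by
    have h1 : aeval f p = Matrix.toLinAlgEquiv' (aeval A p) := by
      rw [hf]
      exact aeval_algHom_apply (Matrix.toLinAlgEquiv' (R := F) (n := Fin n)).toAlgHom A p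
    rw [h1]
    ext v i
    simp [Matrix.toLinAlgEquiv'_apply, Matrix.mulVecLin_apply]
  rw [Matrix.rank, hcomm, hp2]
end

section
/- Let F be an algebraically closed field, let A be an n×n matrix over F, and let λ ∈ F. If the minimal polynomial of A equals (X − λ)^d with 2d > n, then the matrix (A − λ·I)^{d−1} has rank exactly 1. -/
open Polynomial Matrix

section Aux

variable {F : Type*} [Field F] {V : Type*} [AddCommGroup V] [Module F V]
  [FiniteDimensional F V]

/-- Rank-nullity for a map restricted to a submodule. -/
lemma finrank_map_add_finrank_inf_ker (f : V →ₗ[F] V) (p : Submodule F V) :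
    Module.finrank F (p.map f) + Module.finrank F (LinearMap.ker f ⊓ p : Submodule F V)
      = Module.finrank F p := by
  have h := LinearMap.finrank_range_add_finrank_ker (f.domRestrict p)
  rw [LinearMap.range_domRestrict, LinearMap.ker_domRestrict] at h
  have he : Submodule.comap p.subtype (LinearMap.ker f)
      = Submodule.comap p.subtype (LinearMap.ker f ⊓ p) := by
    ext x; simp [x.2]
  rw [he, (Submodule.comapSubtypeEquivOfLe (inf_le_right :
    LinearMap.ker f ⊓ p ≤ p)).finrank_eq] at h
  exact h

end Aux

theorem rank_pow_eq_one_of_minpoly_single_eigenvalue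
    (F : Type*) [Field F] [IsAlgClosed F] (n : ℕ)
    (A : Matrix (Fin n) (Fin n) F) (lam : F) (d : ℕ)
    (hmin : minpoly F A = (X - C lam) ^ d) (h : 2 * d > n) :
    Matrix.rank ((A - lam • (1 : Matrix (Fin n) (Fin n) F)) ^ (d - 1)) = 1 := by
  have hd : 0 < d := by omega
  set N : Matrix (Fin n) (Fin n) F := A - lam • 1 with hN
  have haev : ∀ k : ℕ, aeval A ((X - C lam) ^ k) = N ^ k := by
    intro k
    rw [map_pow, map_sub, aeval_X, aeval_C, hN, Algebra.algebraMap_eq_smul_one]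
  have hNd : N ^ d = 0 := by
    rw [← haev, ← hmin, minpoly.aeval]
  have hNd1 : N ^ (d - 1) ≠ 0 := by
    intro h0
    have hmono : ((X - C lam) ^ (d - 1)).Monic := (monic_X_sub_C lam).pow _
    have hmin' := minpoly.min F A hmono (by rw [haev]; exact h0)
    rw [hmin] at hmin'
    have hmin'' := natDegree_le_natDegree hmin'
    rw [natDegree_pow, natDegree_pow, natDegree_X_sub_C] at hmin''
    omega
  -- translate to linear maps
  set f : (Fin n → F) →ₗ[F] (Fin n → F) := N.mulVecLin with hf
  have hfpow : ∀ k : ℕ, (N ^ k).mulVecLin = f ^ k := by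
    intro k
    induction k with
    | zero => simp only [pow_zero, Matrix.mulVecLin_one]; rfl
    | succ k ih =>
      rw [pow_succ, pow_succ, Matrix.mulVecLin_mul, ih, Module.End.mul_eq_comp]
  set r : ℕ → ℕ := fun k => Module.finrank F (LinearMap.range (f ^ k)) with hr
  have hrank : ∀ k : ℕ, (N ^ k).rank = r k := by
    intro k; rw [Matrix.rank, hfpow]
  have hrd : r d = 0 := by
    rw [← hrank, hNd, Matrix.rank_zero]
  set e : ℕ → ℕ := fun k =>
    Module.finrank F (LinearMap.ker f ⊓ LinearMap.range (f ^ k) : Submodule F (Fin n → F))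
    with he
  have hrec : ∀ k : ℕ, r (k + 1) + e k = r k := by
    intro k
    have hre : LinearMap.range (f ^ (k + 1)) = (LinearMap.range (f ^ k)).map f := by
      rw [pow_succ', Module.End.mul_eq_comp, LinearMap.range_comp]
    have h5 := finrank_map_add_finrank_inf_ker f (LinearMap.range (f ^ k))
    rw [← hre] at h5
    exact h5
  have hmonoe : ∀ j k : ℕ, j ≤ k → e k ≤ e j := by
    intro j k hjk
    apply Submodule.finrank_mono
    apply inf_le_inf_left
    obtain ⟨m, rfl⟩ := Nat.exists_eq_add_of_le hjk
    rw [pow_add, Module.End.mul_eq_comp]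
    exact LinearMap.range_comp_le_range _ _
  -- r (d-1) ≥ 1
  have hpos : 1 ≤ r (d - 1) := by
    by_contra hc
    push_neg at hc
    have hz : r (d - 1) = 0 := by omega
    have hbot : LinearMap.range (f ^ (d - 1)) = ⊥ := by
      rw [← Submodule.finrank_eq_zero]
      exact hz
    have hf0 : f ^ (d - 1) = 0 := LinearMap.range_eq_bot.mp hbot
    apply hNd1
    have hm0 : (N ^ (d - 1)).mulVecLin = 0 := by rw [hfpow]; exact hf0
    ext i j
    have := congrFun (congrArg (fun g : (Fin n → F) →ₗ[F] (Fin n → F) =>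
      g (Pi.single j 1)) hm0) i
    simpa [Matrix.mulVecLin_apply, Matrix.mulVec_single_one] using this
  have hle : r (d - 1) ≤ 1 := by
    by_contra hc
    push_neg at hc
    have hed : 2 ≤ e (d - 1) := by
      have := hrec (d - 1)
      rw [Nat.sub_add_cancel hd, hrd] at this
      omega
    have key : ∀ k : ℕ, k ≤ d → r k + 2 * k ≤ n := by
      intro k hk
      induction k with
      | zero =>
        have : r 0 ≤ n := by
          exact le_of_le_of_eq (Submodule.finrank_le (LinearMap.range (f ^ 0))) (Module.finrank_fin_fun (R := F))
        omega
      | succ k ih =>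
        have hk' : k ≤ d - 1 := by omega
        have h2 : 2 ≤ e k := le_trans hed (hmonoe k (d - 1) hk')
        have h3 := hrec k
        have h4 := ih (by omega)
        omega
    have := key d le_rfl
    omega
  have := hrank (d - 1)
  omega
end

section
/- Let F be an algebraically closed field, let A be an n×n matrix over F, and let λ₁, λ₂ ∈ F with λ₁ ≠ λ₂. If the minimal polynomial of A equals (X − λ₁)^m · (X − λ₂) with 2m ≥ n, then the matrix (A − λ₁·I)^{m−1} · (A − λ₂·I) has rank exactly 1. -/
open Polynomial Matrix

theorem rank_eq_one_of_minpoly_two_eigenvalues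
    (F : Type*) [Field F] [IsAlgClosed F] (n : ℕ)
    (A : Matrix (Fin n) (Fin n) F) (lam₁ lam₂ : F) (hne : lam₁ ≠ lam₂) (m : ℕ)
    (hmin : minpoly F A = (X - C lam₁) ^ m * (X - C lam₂)) (h : 2 * m ≥ n) :
    Matrix.rank ((A - lam₁ • (1 : Matrix (Fin n) (Fin n) F)) ^ (m - 1) *
      (A - lam₂ • (1 : Matrix (Fin n) (Fin n) F))) = 1 := by
  set N : Matrix (Fin n) (Fin n) F := A - lam₁ • (1 : Matrix (Fin n) (Fin n) F) with hN
  set M : Matrix (Fin n) (Fin n) F := A - lam₂ • (1 : Matrix (Fin n) (Fin n) F) with hM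
  have haN : aeval A (X - C lam₁) = N := by
    simp [hN, Algebra.algebraMap_eq_smul_one]
  have haM : aeval A (X - C lam₂) = M := by
    simp [hM, Algebra.algebraMap_eq_smul_one]
  have hannihil : N ^ m * M = 0 := by
    have h0 := minpoly.aeval F A
    rw [hmin] at h0
    rw [_root_.map_mul, map_pow, haN, haM] at h0
    exact h0
  -- degree of the minimal polynomial
  have hdeg : (minpoly F A).natDegree = m + 1 := by
    rw [hmin, natDegree_mul (pow_ne_zero _ (X_sub_C_ne_zero lam₁)) (X_sub_C_ne_zero lam₂),
      natDegree_pow, natDegree_X_sub_C, natDegree_X_sub_C, mul_one]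
  have hmn : m + 1 ≤ n := by
    have hd := Polynomial.natDegree_le_of_dvd (Matrix.minpoly_dvd_charpoly A)
      (A.charpoly_monic.ne_zero)
    rw [hdeg, Matrix.charpoly_natDegree_eq_dim, Fintype.card_fin] at hd
    exact hd
  have hm1 : 1 ≤ m := by omega
  -- the matrix in question
  set B : Matrix (Fin n) (Fin n) F := N ^ (m - 1) * M with hB
  have hBpoly : aeval A ((X - C lam₁) ^ (m - 1) * (X - C lam₂)) = B := by
    rw [_root_.map_mul, map_pow, haN, haM]
  have hBne : B ≠ 0 := by
    intro h0
    have hdvd : minpoly F A ∣ (X - C lam₁) ^ (m - 1) * (X - C lam₂) :=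
      minpoly.dvd F A (by rw [hBpoly, h0])
    have hple := Polynomial.natDegree_le_of_dvd hdvd
      (mul_ne_zero (pow_ne_zero _ (X_sub_C_ne_zero lam₁)) (X_sub_C_ne_zero lam₂))
    rw [hdeg, natDegree_mul (pow_ne_zero _ (X_sub_C_ne_zero lam₁)) (X_sub_C_ne_zero lam₂),
      natDegree_pow, natDegree_X_sub_C, natDegree_X_sub_C, mul_one] at hple
    omega
  -- rank is positive
  have hrank_pos : 0 < Matrix.rank B := by
    obtain ⟨i, j, hij⟩ : ∃ i j, B i j ≠ 0 := by
      by_contra hc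
      push_neg at hc
      exact hBne (by ext i j; simp [hc])
    have hvne : B *ᵥ Pi.single j 1 ≠ 0 := by
      intro h0
      have := congrFun h0 i
      rw [Matrix.mulVec_single_one] at this
      simp only [Matrix.transpose_apply, Matrix.of_apply, Pi.zero_apply] at this
      exact hij this
    rw [Matrix.rank]
    rw [Module.finrank_pos_iff_exists_ne_zero (R := F)]
    refine ⟨⟨B *ᵥ Pi.single j 1, ⟨Pi.single j 1, rfl⟩⟩, ?_⟩
    simpa [Submodule.mk_eq_zero] using hvne
  -- M is not invertible
  have hMsing : ∃ v ≠ 0, M *ᵥ v = 0 := by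
    rw [Matrix.exists_mulVec_eq_zero_iff]
    by_contra hdet
    have hMunit : IsUnit M := by
      rw [Matrix.isUnit_iff_isUnit_det]
      exact isUnit_iff_ne_zero.mpr hdet
    obtain ⟨u, hu⟩ := hMunit.exists_right_inv
    have hNm : N ^ m = 0 := by
      have : N ^ m * (M * u) = 0 * u := by rw [← mul_assoc, hannihil]
      rwa [hu, mul_one, zero_mul] at this
    have hdvd : minpoly F A ∣ (X - C lam₁) ^ m :=
      minpoly.dvd F A (by rw [map_pow, haN, hNm])
    have hple := Polynomial.natDegree_le_of_dvd hdvd (pow_ne_zero _ (X_sub_C_ne_zero lam₁))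
    rw [hdeg, natDegree_pow, natDegree_X_sub_C, mul_one] at hple
    omega
  -- kernels intersect trivially
  have hker_disj : ∀ u : Fin n → F, (N ^ m) *ᵥ u = 0 → M *ᵥ u = 0 → u = 0 := by
    intro u hu1 hu2
    have hNu : N *ᵥ u = (lam₂ - lam₁) • u := by
      have hMu : A *ᵥ u = lam₂ • u := by
        have : (A - lam₂ • (1 : Matrix (Fin n) (Fin n) F)) *ᵥ u = 0 := hu2
        rw [Matrix.sub_mulVec, sub_eq_zero] at this
        rw [this, Matrix.smul_mulVec, Matrix.one_mulVec]
      rw [hN, Matrix.sub_mulVec, hMu, Matrix.smul_mulVec, Matrix.one_mulVec, sub_smul]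
    have hpow : ∀ k : ℕ, (N ^ k) *ᵥ u = ((lam₂ - lam₁) ^ k) • u := by
      intro k
      induction k with
      | zero => simp
      | succ k ih =>
        rw [pow_succ', ← Matrix.mulVec_mulVec, ih, Matrix.mulVec_smul, hNu, smul_smul,
          ← pow_succ]
    have := hpow m
    rw [hu1] at this
    have hc : ((lam₂ - lam₁) ^ m : F) ≠ 0 := pow_ne_zero _ (sub_ne_zero.mpr hne.symm)
    have := this.symm
    rcases smul_eq_zero.mp this with h' | h'
    · exact absurd h' hc
    · exact h'
  -- main: rank ≤ 1
  by_contra hrank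
  have h2 : 2 ≤ Matrix.rank B := by omega
  rw [Matrix.rank] at h2
  obtain ⟨f, hf⟩ := exists_linearIndependent_of_le_finrank h2
  have hw : LinearIndependent F (fun j : Fin 2 => ((f j : Fin n → F))) := by
    have := hf.map' (LinearMap.range B.mulVecLin).subtype (Submodule.ker_subtype _)
    exact this
  choose x hx using fun j => (f j).2
  set z : Fin 2 → (Fin n → F) := fun j => M *ᵥ x j with hz
  have hcomp : ∀ (e i : ℕ) (u : Fin n → F), (N ^ e) *ᵥ ((N ^ i) *ᵥ u) = (N ^ (e + i)) *ᵥ u := by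
    intro e i u
    rw [Matrix.mulVec_mulVec, ← pow_add]
  have hwz : ∀ j, (N ^ (m - 1)) *ᵥ z j = (f j : Fin n → F) := by
    intro j
    rw [hz]
    rw [Matrix.mulVec_mulVec, ← hB, ← Matrix.mulVecLin_apply, hx j]
  have hz0 : ∀ j, (N ^ m) *ᵥ z j = 0 := by
    intro j
    rw [hz, Matrix.mulVec_mulVec, hannihil, Matrix.zero_mulVec]
  have hzpow0 : ∀ (e : ℕ), m ≤ e → ∀ j, (N ^ e) *ᵥ z j = 0 := by
    intro e he j
    have : N ^ e = N ^ (e - m) * N ^ m := by rw [← pow_add]; congr 1; omega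
    rw [this, ← Matrix.mulVec_mulVec, hz0, Matrix.mulVec_zero]
  set v : Fin m × Fin 2 → (Fin n → F) := fun p => (N ^ (p.1 : ℕ)) *ᵥ z p.2 with hv
  -- the family v is linearly independent
  have hvind : LinearIndependent F v := by
    rw [Fintype.linearIndependent_iff]
    intro a hsum
    have key : ∀ k : ℕ, ∀ p : Fin m × Fin 2, (p.1 : ℕ) < k → a p = 0 := by
      intro k
      induction k with
      | zero => intro p hp; omega
      | succ k ih =>
        intro p hp
        rcases Nat.lt_or_ge (p.1 : ℕ) k with h' | h'
        · exact ih p h'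
        have hpk : (p.1 : ℕ) = k := by omega
        have hkm : k < m := by omega
        have happ := congrArg ((N ^ (m - 1 - k)).mulVecLin) hsum
        simp only [map_sum, _root_.map_smul, Matrix.mulVecLin_apply, map_zero] at happ
        have hterm : ∀ q : Fin m × Fin 2,
            a q • ((N ^ (m - 1 - k)) *ᵥ v q) =
              a q • ((N ^ (m - 1 - k + (q.1 : ℕ))) *ᵥ z q.2) := by
          intro q
          rw [hv]
          rw [hcomp]
        rw [Finset.sum_congr rfl (fun q _ => hterm q)] at happ
        rw [Fintype.sum_prod_type] at happ
        have hinner : ∀ i : Fin m, i ≠ (⟨k, hkm⟩ : Fin m) →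
            (∑ j : Fin 2, a (i, j) • ((N ^ (m - 1 - k + (i : ℕ))) *ᵥ z j)) = 0 := by
          intro i hi
          rcases Nat.lt_or_ge (i : ℕ) k with hik | hik
          · apply Finset.sum_eq_zero
            intro j _
            rw [ih (i, j) hik, zero_smul]
          · have hik' : k < (i : ℕ) := by
              rcases Nat.lt_or_ge k (i : ℕ) with h'' | h''
              · exact h''
              · exact absurd (Fin.ext (show ((i : Fin m) : ℕ) = k by omega)) hi
            apply Finset.sum_eq_zero
            intro j _
            rw [hzpow0 (m - 1 - k + (i : ℕ)) (by omega) j, smul_zero]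
        rw [Fintype.sum_eq_single (⟨k, hkm⟩ : Fin m) hinner] at happ
        have hexp : m - 1 - k + ((⟨k, hkm⟩ : Fin m) : ℕ) = m - 1 := by simp; omega
        rw [hexp] at happ
        have hcoef := (Fintype.linearIndependent_iff.mp hw)
          (fun j => a ((⟨k, hkm⟩ : Fin m), j)) (by
            rw [← happ]
            exact Finset.sum_congr rfl (fun j _ => by rw [hwz j]))
        have hp1 : p.1 = (⟨k, hkm⟩ : Fin m) := Fin.ext (show ((p.1 : Fin m) : ℕ) = k by omega)
        have hthis := hcoef p.2
        rw [← hp1] at hthis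
        exact hthis
    intro p
    exact key m p p.1.isLt
  -- v lands inside ker of (N^m).mulVecLin
  set K : Submodule F (Fin n → F) := LinearMap.ker (N ^ m).mulVecLin with hK
  have hvK : ∀ p, v p ∈ K := by
    intro p
    rw [hK, LinearMap.mem_ker, Matrix.mulVecLin_apply, hv]
    rw [hcomp m (p.1 : ℕ) (z p.2)]
    exact hzpow0 (m + (p.1 : ℕ)) (by omega) p.2
  have hvind' : LinearIndependent F (fun p => (⟨v p, hvK p⟩ : K)) := by
    apply LinearIndependent.of_comp K.subtype
    exact hvind
  have hcard : 2 * m ≤ Module.finrank F K := by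
    have := hvind'.fintype_card_le_finrank
    simpa [Fintype.card_prod, mul_comm] using this
  -- ker M is nontrivial
  set K' : Submodule F (Fin n → F) := LinearMap.ker M.mulVecLin with hK'
  have hK'pos : 0 < Module.finrank F K' := by
    obtain ⟨u, hu, hu0⟩ := hMsing
    rw [Module.finrank_pos_iff_exists_ne_zero (R := F)]
    refine ⟨⟨u, by rw [hK', LinearMap.mem_ker, Matrix.mulVecLin_apply]; exact hu0⟩, ?_⟩
    simpa [Submodule.mk_eq_zero] using hu
  have hdisj : K ⊓ K' = ⊥ := by
    rw [Submodule.eq_bot_iff]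
    intro u hu
    obtain ⟨hu1, hu2⟩ := Submodule.mem_inf.mp hu
    rw [hK, LinearMap.mem_ker, Matrix.mulVecLin_apply] at hu1
    rw [hK', LinearMap.mem_ker, Matrix.mulVecLin_apply] at hu2
    exact hker_disj u hu1 hu2
  have hsum_le : Module.finrank F K + Module.finrank F K' ≤ n := by
    have heq := Submodule.finrank_sup_add_finrank_inf_eq K K'
    rw [hdisj] at heq
    simp only [finrank_bot, add_zero] at heq
    rw [← heq]
    have := Submodule.finrank_le (K ⊔ K')
    rwa [Module.finrank_pi, Fintype.card_fin] at this
  omega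
end

section
/- Let F be an algebraically closed field, let A be an n×n matrix over F whose minimal polynomial is ∏_{i=1}^{s} (X − λ_i)^{a_i} with λ₁, …, λ_s pairwise distinct elements of F and each a_i ≥ 1. Suppose that rank((A − λ₁·I)^{a₁−1}) = rank((A − λ₁·I)^{a₁}) + 1 (equivalently, λ₁ has a unique Jordan block of maximal size a₁). Then the matrix (A − λ₁·I)^{a₁−1} · ∏_{i=2}^{s} (A − λ_i·I)^{a_i} has rank exactly 1. -/
open Polynomial Matrix

private lemma aux_inter (K : Type*) [Field K] {V : Type*} [AddCommGroup V] [Module K V]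
    [FiniteDimensional K V] (f : V →ₗ[K] V) (W : Submodule K V)
    (h : Module.finrank K W = Module.finrank K (W.map f) + 1) :
    Module.finrank K (W ⊓ LinearMap.ker f : Submodule K V) = 1 := by
  have h1 := LinearMap.finrank_range_add_finrank_ker (f.domRestrict W)
  rw [LinearMap.range_domRestrict, LinearMap.ker_domRestrict] at h1
  have h2 : (LinearMap.ker f).comap W.subtype = (W ⊓ LinearMap.ker f).comap W.subtype := by
    rw [Submodule.comap_inf, Submodule.comap_subtype_self, top_inf_eq]
  have h3 : Module.finrank K ((W ⊓ LinearMap.ker f).comap W.subtype)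
      = Module.finrank K (W ⊓ LinearMap.ker f : Submodule K V) :=
    (Submodule.comapSubtypeEquivOfLe inf_le_left).finrank_eq
  rw [h2, h3] at h1
  omega

theorem rank_eq_one_of_unique_maximal_jordan_block
    (F : Type*) [Field F] [IsAlgClosed F] (n s : ℕ) (hs : 0 < s)
    (A : Matrix (Fin n) (Fin n) F) (lam : Fin s → F) (hinj : Function.Injective lam)
    (a : Fin s → ℕ) (ha : ∀ i, 1 ≤ a i)
    (hmin : minpoly F A = ∏ i, (X - C (lam i)) ^ a i)
    (hrk : Matrix.rank ((A - lam ⟨0, hs⟩ • (1 : Matrix (Fin n) (Fin n) F)) ^ (a ⟨0, hs⟩ - 1)) =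
      Matrix.rank ((A - lam ⟨0, hs⟩ • (1 : Matrix (Fin n) (Fin n) F)) ^ a ⟨0, hs⟩) + 1) :
    Matrix.rank (Polynomial.aeval A
      ((X - C (lam ⟨0, hs⟩)) ^ (a ⟨0, hs⟩ - 1) *
        ∏ i ∈ Finset.univ.erase ⟨0, hs⟩, (X - C (lam i)) ^ a i)) = 1 := by
  set i0 : Fin s := ⟨0, hs⟩
  set q : F[X] := ∏ i ∈ Finset.univ.erase i0, (X - C (lam i)) ^ a i with hq
  set p : F[X] := (X - C (lam i0)) ^ (a i0 - 1) * q with hp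
  have ha0 : a i0 - 1 + 1 = a i0 := Nat.sub_add_cancel (ha i0)
  -- (X - C λ0) * p = minpoly
  have hmul : (X - C (lam i0)) * p = minpoly F A := by
    rw [hmin, hp, ← mul_assoc, ← pow_succ', ha0, hq]
    exact Finset.mul_prod_erase Finset.univ (fun i => (X - C (lam i)) ^ a i) (Finset.mem_univ i0)
  -- p is monic, nonzero
  have hpm : p.Monic := by
    apply Polynomial.Monic.mul ((monic_X_sub_C _).pow _)
    exact Polynomial.monic_prod_of_monic _ _ fun i _ => (monic_X_sub_C _).pow _
  have hp0 : p ≠ 0 := hpm.ne_zero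
  -- degree comparison
  have hdeg : p.natDegree < (minpoly F A).natDegree := by
    rw [← hmul, Polynomial.natDegree_mul (X_sub_C_ne_zero _) hp0, natDegree_X_sub_C]
    omega
  -- aeval A p ≠ 0
  have hpA : Polynomial.aeval A p ≠ 0 := by
    intro h0
    have hdvd := minpoly.dvd F A h0
    have := Polynomial.natDegree_le_natDegree (Polynomial.degree_le_of_dvd hdvd hp0)
    omega
  -- setup
  set N : Matrix (Fin n) (Fin n) F := A - lam i0 • (1 : Matrix (Fin n) (Fin n) F) with hN
  have hNa : Polynomial.aeval A (X - C (lam i0)) = N := by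
    simp [hN, Algebra.algebraMap_eq_smul_one]
  have hbridge : ∀ M : Matrix (Fin n) (Fin n) F, M.mulVecLin = Matrix.toLinAlgEquiv' M :=
    fun M => LinearMap.ext fun v => rfl
  set f : (Fin n → F) →ₗ[F] (Fin n → F) := Matrix.toLinAlgEquiv' N with hf
  have hpow : ∀ k : ℕ, (N ^ k).mulVecLin = f ^ k := by
    intro k; rw [hbridge, map_pow]
  set W : Submodule F (Fin n → F) := LinearMap.range (f ^ (a i0 - 1)) with hW
  -- the rank hypothesis, translated
  have hrk' : Module.finrank F W = Module.finrank F (W.map f) + 1 := by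
    have hWmap : W.map f = LinearMap.range (f ^ a i0) := by
      rw [hW, ← LinearMap.range_comp, ← Module.End.mul_eq_comp, ← pow_succ', ha0]
    rw [hWmap]
    have e1 : Matrix.rank (N ^ (a i0 - 1)) = Module.finrank F W := by
      rw [Matrix.rank, hpow, hW]
    have e2 : Matrix.rank (N ^ a i0) = Module.finrank F (LinearMap.range (f ^ a i0)) := by
      rw [Matrix.rank, hpow]
    rw [← e1, ← e2]
    exact hrk
  have hker : Module.finrank F (W ⊓ LinearMap.ker f : Submodule F (Fin n → F)) = 1 :=
    aux_inter F f W hrk'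
  -- image of aeval A p is inside W ⊓ ker f
  have hfact : Polynomial.aeval A p = N ^ (a i0 - 1) * Polynomial.aeval A q := by
    rw [hp, _root_.map_mul, map_pow, hNa]
  have hsub : LinearMap.range (Polynomial.aeval A p).mulVecLin ≤ W ⊓ LinearMap.ker f := by
    apply le_inf
    · rw [hfact, Matrix.mulVecLin_mul, hpow, LinearMap.range_comp, hW]
      exact LinearMap.map_le_range
    · rintro x ⟨v, rfl⟩
      have hzero : N * Polynomial.aeval A p = 0 := by
        rw [← hNa, ← _root_.map_mul, hmul, minpoly.aeval]
      have : f ∘ₗ (Polynomial.aeval A p).mulVecLin = 0 := by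
        rw [hf, ← hbridge, ← Matrix.mulVecLin_mul, hzero, Matrix.mulVecLin_zero]
      exact LinearMap.congr_fun this v
  -- conclude
  have hle : Matrix.rank (Polynomial.aeval A p) ≤ 1 := by
    rw [Matrix.rank]
    calc Module.finrank F (LinearMap.range (Polynomial.aeval A p).mulVecLin)
        ≤ Module.finrank F (W ⊓ LinearMap.ker f : Submodule F (Fin n → F)) :=
          Submodule.finrank_mono hsub
      _ = 1 := hker
  have hge : Matrix.rank (Polynomial.aeval A p) ≠ 0 := by
    intro h0
    apply hpA
    rw [Matrix.rank] at h0
    have hbot : LinearMap.range (Polynomial.aeval A p).mulVecLin = ⊥ :=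
      Submodule.finrank_eq_zero.mp h0
    have hml : (Polynomial.aeval A p).mulVecLin = 0 := LinearMap.range_eq_bot.mp hbot
    ext i j
    have := LinearMap.congr_fun hml (Pi.single j 1)
    simpa [Matrix.mulVecLin_apply, Matrix.mulVec_single_one] using congrFun this i
  omega
end

section
/- Let F be an algebraically closed field and let A be an n×n matrix over F whose minimal polynomial has degree d with 2d > n. Then there exists an eigenvalue λ of A such that, writing a for the multiplicity of λ as a root of the minimal polynomial of A, one has rank((A − λ·I)^{a−1}) = rank((A − λ·I)^{a}) + 1 (i.e., λ has a unique Jordan block of maximal size). -/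
open Polynomial Matrix Module

set_option linter.unusedSectionVars false

section Aux

variable {F V : Type*} [Field F] [AddCommGroup V] [Module F V] [FiniteDimensional F V]

lemma ker_pow_mono (g : Module.End F V) {k l : ℕ} (h : k ≤ l) :
    LinearMap.ker (g ^ k) ≤ LinearMap.ker (g ^ l) := by
  intro x hx
  rw [LinearMap.mem_ker] at hx ⊢
  obtain ⟨m, rfl⟩ := Nat.exists_eq_add_of_le h
  rw [add_comm k m, pow_add, Module.End.mul_apply, hx, map_zero]

lemma finrank_ker_pow_mono (g : Module.End F V) {k l : ℕ} (h : k ≤ l) :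
    Module.finrank F (LinearMap.ker (g ^ k)) ≤ Module.finrank F (LinearMap.ker (g ^ l)) :=
  Submodule.finrank_mono (ker_pow_mono g h)

lemma finrank_ker_pow_convex (g : Module.End F V) (k : ℕ) :
    Module.finrank F (LinearMap.ker (g ^ (k + 1 + 1))) + Module.finrank F (LinearMap.ker (g ^ k)) ≤
      2 * Module.finrank F (LinearMap.ker (g ^ (k + 1))) := by
  have h01 : LinearMap.ker (g ^ k) ≤ LinearMap.ker (g ^ (k + 1)) := ker_pow_mono g (by omega)
  have h12 : LinearMap.ker (g ^ (k + 1)) ≤ LinearMap.ker (g ^ (k + 1 + 1)) :=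
    ker_pow_mono g (by omega)
  have hmap : ∀ x ∈ LinearMap.ker (g ^ (k + 1 + 1)), g x ∈ LinearMap.ker (g ^ (k + 1)) := by
    intro x hx
    rw [LinearMap.mem_ker] at hx ⊢
    have : (g ^ (k + 1 + 1)) x = (g ^ (k + 1)) (g x) := by
      rw [pow_succ, Module.End.mul_apply]
    rw [← this, hx]
  set ψ : LinearMap.ker (g ^ (k + 1 + 1)) →ₗ[F] LinearMap.ker (g ^ (k + 1)) :=
    g.restrict hmap with hψ
  set W : Submodule F (LinearMap.ker (g ^ (k + 1))) :=
    (LinearMap.ker (g ^ k)).comap (LinearMap.ker (g ^ (k + 1))).subtype with hW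
  set φ := W.mkQ ∘ₗ ψ with hφ
  have hrn : Module.finrank F (LinearMap.range φ) + Module.finrank F (LinearMap.ker φ)
      = Module.finrank F (LinearMap.ker (g ^ (k + 1 + 1))) :=
    LinearMap.finrank_range_add_finrank_ker φ
  have hker : LinearMap.ker φ
      = (LinearMap.ker (g ^ (k + 1))).comap (LinearMap.ker (g ^ (k + 1 + 1))).subtype := by
    ext x
    simp only [hφ, LinearMap.mem_ker, LinearMap.comp_apply, Submodule.mkQ_apply,
      Submodule.Quotient.mk_eq_zero, hW, Submodule.mem_comap]
    have hc : (ψ x : V) = g x := rfl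
    rw [Submodule.coe_subtype, hc, Submodule.coe_subtype]
    constructor
    · intro hgx
      rw [pow_succ, Module.End.mul_apply]; exact hgx
    · intro hx
      rw [← Module.End.mul_apply, ← pow_succ]; exact hx
  have hker_rank : Module.finrank F (LinearMap.ker φ)
      = Module.finrank F (LinearMap.ker (g ^ (k + 1))) := by
    rw [hker]; exact LinearEquiv.finrank_eq (Submodule.comapSubtypeEquivOfLe h12)
  have hW_rank : Module.finrank F W = Module.finrank F (LinearMap.ker (g ^ k)) :=
    LinearEquiv.finrank_eq (Submodule.comapSubtypeEquivOfLe h01)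
  have hquot : Module.finrank F ((LinearMap.ker (g ^ (k + 1))) ⧸ W) + Module.finrank F W
      = Module.finrank F (LinearMap.ker (g ^ (k + 1))) :=
    Submodule.finrank_quotient_add_finrank W
  have hrange : Module.finrank F (LinearMap.range φ)
      ≤ Module.finrank F ((LinearMap.ker (g ^ (k + 1))) ⧸ W) :=
    (LinearMap.range φ).finrank_le
  omega

lemma finrank_ker_pow_step_antitone (g : Module.End F V) {k l : ℕ} (h : k ≤ l) :
    Module.finrank F (LinearMap.ker (g ^ (l + 1))) - Module.finrank F (LinearMap.ker (g ^ l)) ≤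
      Module.finrank F (LinearMap.ker (g ^ (k + 1)))
        - Module.finrank F (LinearMap.ker (g ^ k)) := by
  induction l with
  | zero => obtain rfl := Nat.le_zero.mp h; exact le_rfl
  | succ m ih =>
    rcases Nat.eq_or_lt_of_le h with rfl | hlt
    · omega
    · have h1 := ih (by omega)
      have h2 := finrank_ker_pow_convex g m
      have h3 := finrank_ker_pow_mono g (show m ≤ m + 1 by omega)
      have h4 := finrank_ker_pow_mono g (show m + 1 ≤ m + 1 + 1 by omega)
      omega

lemma two_mul_le_finrank_ker (g : Module.End F V) {a : ℕ} (ha : 1 ≤ a)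
    (hstep : Module.finrank F (LinearMap.ker (g ^ (a - 1))) + 2
      ≤ Module.finrank F (LinearMap.ker (g ^ a))) :
    2 * a ≤ Module.finrank F (LinearMap.ker (g ^ a)) := by
  have hsub : a - 1 + 1 = a := by omega
  have key : ∀ k, k ≤ a → 2 * k ≤ Module.finrank F (LinearMap.ker (g ^ k)) := by
    intro k hk
    induction k with
    | zero => omega
    | succ m ih =>
      have h1 : 2 * m ≤ Module.finrank F (LinearMap.ker (g ^ m)) := ih (by omega)
      have h2 := finrank_ker_pow_step_antitone g (k := m) (l := a - 1) (by omega)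
      rw [hsub] at h2
      have h3 := finrank_ker_pow_mono g (show m ≤ m + 1 by omega)
      have h4 := finrank_ker_pow_mono g (show a - 1 ≤ a by omega)
      omega
  exact key a le_rfl

lemma ker_pow_lt (f : Module.End F V) (lam : F) {a : ℕ}
    (ha : a = (minpoly F f).rootMultiplicity lam) (ha1 : 1 ≤ a) :
    LinearMap.ker ((f - lam • 1) ^ (a - 1)) ≠ LinearMap.ker ((f - lam • 1) ^ a) := by
  intro hEq
  set g : Module.End F V := f - lam • 1 with hg
  have hint : IsIntegral F f := Algebra.IsIntegral.isIntegral f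
  have hp0 : minpoly F f ≠ 0 := minpoly.ne_zero hint
  obtain ⟨q, hq⟩ : (X - C lam) ^ a ∣ minpoly F f :=
    ha ▸ Polynomial.pow_rootMultiplicity_dvd (minpoly F f) lam
  have hq0 : q ≠ 0 := by
    rintro rfl; rw [mul_zero] at hq; exact hp0 hq
  have haevg : aeval f (X - C lam) = g := by
    simp [hg, Algebra.algebraMap_eq_smul_one]
  have hpf : aeval f (minpoly F f) = 0 := minpoly.aeval F f
  rw [hq, _root_.map_mul, map_pow, haevg] at hpf
  have haeval : aeval f ((X - C lam) ^ (a - 1) * q) = 0 := by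
    rw [_root_.map_mul, map_pow, haevg]
    ext v
    have hv : (g ^ a) ((aeval f q) v) = 0 := by
      have := congrArg (fun (t : Module.End F V) => t v) hpf
      simpa [Module.End.mul_apply] using this
    have hv' : (aeval f q) v ∈ LinearMap.ker (g ^ (a - 1)) := by
      rw [hEq]; exact hv
    simpa [Module.End.mul_apply] using hv'
  have hne : (X - C lam) ^ (a - 1) * q ≠ 0 :=
    mul_ne_zero (pow_ne_zero _ (X_sub_C_ne_zero lam)) hq0
  have hdeg := Polynomial.natDegree_le_natDegree
    (minpoly.degree_le_of_ne_zero F f hne haeval)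
  have h1 : (minpoly F f).natDegree = a + q.natDegree := by
    rw [hq, natDegree_mul (pow_ne_zero _ (X_sub_C_ne_zero lam)) hq0,
      natDegree_pow, natDegree_X_sub_C, mul_one]
  have h2 : ((X - C lam) ^ (a - 1) * q).natDegree = (a - 1) + q.natDegree := by
    rw [natDegree_mul (pow_ne_zero _ (X_sub_C_ne_zero lam)) hq0,
      natDegree_pow, natDegree_X_sub_C, mul_one]
  omega

lemma sum_finrank_le_finrank {ι : Type*} [DecidableEq ι] (q : ι → Submodule F V)
    (hq : iSupIndep q) (p : ι → Submodule F V) (hpq : ∀ i, p i ≤ q i) (s : Finset ι) :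
    ∑ i ∈ s, Module.finrank F (p i) ≤ Module.finrank F V := by
  have key : ∀ s : Finset ι, ∑ i ∈ s, Module.finrank F (p i)
      ≤ Module.finrank F (⨆ i ∈ (s : Set ι), q i : Submodule F V) := by
    intro s
    induction s using Finset.induction_on with
    | empty => simp
    | @insert j s hj ih =>
      rw [Finset.sum_insert hj]
      have hdisj : Disjoint (q j) (⨆ i ∈ (s : Set ι), q i) :=
        hq.disjoint_biSup (by simpa using hj)
      have hsup : (⨆ i ∈ ((insert j s : Finset ι) : Set ι), q i) =
          q j ⊔ ⨆ i ∈ (s : Set ι), q i := by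
        rw [Finset.coe_insert]; exact iSup_insert
      calc Module.finrank F (p j) + ∑ i ∈ s, Module.finrank F (p i)
          ≤ Module.finrank F (q j)
            + Module.finrank F (⨆ i ∈ (s : Set ι), q i : Submodule F V) :=
            Nat.add_le_add (Submodule.finrank_mono (hpq j)) ih
        _ = Module.finrank F (q j ⊔ ⨆ i ∈ (s : Set ι), q i : Submodule F V) := by
            have h := Submodule.finrank_sup_add_finrank_inf_eq (q j)
              (⨆ i ∈ (s : Set ι), q i : Submodule F V)
            rw [hdisj.eq_bot] at h
            simpa using h.symm
        _ = Module.finrank F (⨆ i ∈ ((insert j s : Finset ι) : Set ι), q i : Submodule F V) := by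
            rw [hsup]
  exact (key s).trans (Submodule.finrank_le _)

end Aux

theorem exists_eigenvalue_unique_maximal_jordan_block
    (F : Type*) [Field F] [IsAlgClosed F] (n : ℕ)
    (A : Matrix (Fin n) (Fin n) F) (d : ℕ)
    (hd : (minpoly F A).natDegree = d) (h : 2 * d > n) :
    ∃ lam ∈ spectrum F A,
      Matrix.rank ((A - lam • (1 : Matrix (Fin n) (Fin n) F)) ^
          ((minpoly F A).rootMultiplicity lam - 1)) =
        Matrix.rank ((A - lam • (1 : Matrix (Fin n) (Fin n) F)) ^
          (minpoly F A).rootMultiplicity lam) + 1 := by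
  classical
  set f : Module.End F (Fin n → F) := Matrix.toLinAlgEquiv' A with hf
  have hmin : minpoly F f = minpoly F A := minpoly.algEquiv_eq _ A
  have hspecEq : spectrum F f = spectrum F A := AlgEquiv.spectrum_eq _ A
  have hint : IsIntegral F f := Algebra.IsIntegral.isIntegral f
  have hp0 : minpoly F A ≠ 0 := hmin ▸ minpoly.ne_zero hint
  -- rank translation
  have hrank : ∀ (k : ℕ) (lam : F),
      Matrix.rank ((A - lam • (1 : Matrix (Fin n) (Fin n) F)) ^ k)
        + Module.finrank F (LinearMap.ker ((f - lam • 1) ^ k)) = n := by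
    intro k lam
    have hB : ((A - lam • (1 : Matrix (Fin n) (Fin n) F)) ^ k).mulVecLin
        = (f - lam • 1) ^ k := by
      have hc : ((A - lam • (1 : Matrix (Fin n) (Fin n) F)) ^ k).mulVecLin
          = Matrix.toLinAlgEquiv' ((A - lam • (1 : Matrix (Fin n) (Fin n) F)) ^ k) :=
        LinearMap.ext fun v => rfl
      rw [hc, map_pow, map_sub, _root_.map_smul, _root_.map_one, hf]
    rw [Matrix.rank, hB]
    have := LinearMap.finrank_range_add_finrank_ker ((f - lam • 1) ^ k)
    rwa [Module.finrank_fin_fun] at this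
  by_contra hcon
  push_neg at hcon
  -- each eigenvalue has at least two maximal Jordan blocks
  have hbig : ∀ lam ∈ (minpoly F A).roots.toFinset,
      2 * (minpoly F A).rootMultiplicity lam
        ≤ Module.finrank F
          (LinearMap.ker ((f - lam • 1) ^ (minpoly F A).rootMultiplicity lam)) := by
    intro lam hlam
    rw [Multiset.mem_toFinset, mem_roots hp0] at hlam
    have ha1 : 1 ≤ (minpoly F A).rootMultiplicity lam :=
      (Polynomial.rootMultiplicity_pos hp0).mpr hlam
    set a := (minpoly F A).rootMultiplicity lam with hadef
    have hspec : lam ∈ spectrum F A := by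
      rw [← hspecEq, ← Module.End.hasEigenvalue_iff_mem_spectrum]
      exact Module.End.hasEigenvalue_of_isRoot (hmin ▸ hlam)
    have hne := ker_pow_lt f lam (a := a) (by rw [hmin]) ha1
    have hlt : Module.finrank F (LinearMap.ker ((f - lam • 1) ^ (a - 1)))
        < Module.finrank F (LinearMap.ker ((f - lam • 1) ^ a)) :=
      Submodule.finrank_lt_finrank_of_lt
        (lt_of_le_of_ne (ker_pow_mono _ (by omega)) hne)
    have hstep : Module.finrank F (LinearMap.ker ((f - lam • 1) ^ (a - 1))) + 2
        ≤ Module.finrank F (LinearMap.ker ((f - lam • 1) ^ a)) := by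
      have hc := hcon lam hspec
      rw [← hadef] at hc
      have h1 := hrank (a - 1) lam
      have h2 := hrank a lam
      omega
    exact two_mul_le_finrank_ker (f - lam • 1) ha1 hstep
  -- sum over eigenvalues
  have hsum : ∑ lam ∈ (minpoly F A).roots.toFinset,
      Module.finrank F
        (LinearMap.ker ((f - lam • 1) ^ (minpoly F A).rootMultiplicity lam)) ≤ n := by
    have := sum_finrank_le_finrank
      (fun lam => f.genEigenspace lam ⊤)
      (f.independent_genEigenspace ⊤)
      (fun lam => LinearMap.ker ((f - lam • 1) ^ (minpoly F A).rootMultiplicity lam))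
      (fun lam => by
        show LinearMap.ker ((f - lam • 1) ^ (minpoly F A).rootMultiplicity lam)
          ≤ f.genEigenspace lam ⊤
        rw [← Module.End.genEigenspace_nat]
        exact (f.genEigenspace lam).monotone le_top)
      (minpoly F A).roots.toFinset
    rwa [Module.finrank_fin_fun] at this
  have hcard : ∑ lam ∈ (minpoly F A).roots.toFinset,
      (minpoly F A).rootMultiplicity lam = d := by
    have hsplit : (minpoly F A).roots.card = (minpoly F A).natDegree :=
      (Polynomial.splits_iff_card_roots).mp (IsAlgClosed.splits _)
    calc ∑ lam ∈ (minpoly F A).roots.toFinset, (minpoly F A).rootMultiplicity lam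
        = ∑ lam ∈ (minpoly F A).roots.toFinset,
            (minpoly F A).roots.count lam := by
          refine Finset.sum_congr rfl fun lam _ => ?_
          rw [Polynomial.count_roots]
      _ = (minpoly F A).roots.card := Multiset.toFinset_sum_count_eq _
      _ = d := by rw [hsplit, hd]
  have : 2 * d ≤ n := by
    calc 2 * d = ∑ lam ∈ (minpoly F A).roots.toFinset,
          2 * (minpoly F A).rootMultiplicity lam := by
          rw [← Finset.mul_sum, hcard]
      _ ≤ ∑ lam ∈ (minpoly F A).roots.toFinset,
          Module.finrank F
            (LinearMap.ker ((f - lam • 1) ^ (minpoly F A).rootMultiplicity lam)) :=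
          Finset.sum_le_sum hbig
      _ ≤ n := hsum
  omega
end

section
/- Let F be an algebraically closed field and let A be an n×n matrix over F whose minimal polynomial has degree d with 2d ≤ n ≤ 3d − 1. Then there exists an eigenvalue λ of A such that, writing a for the multiplicity of λ as a root of the minimal polynomial of A, one has 1 ≤ rank((A − λ·I)^{a−1}) − rank((A − λ·I)^{a}) ≤ 2 (i.e., λ has at most two Jordan blocks of maximal size). -/
open Polynomial Matrix Module

private lemma nat_mult_aux (N : ℕ → ℕ) (a m : ℕ) (ha : 1 ≤ a) (h0 : N 0 = 0)
    (hF : ∀ k, N (k+2) + N k ≤ 2 * N (k+1)) (hm : N (a-1) + m ≤ N a) :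
    a * m ≤ N a := by
  have step : ∀ i, i ≤ a - 1 → N (a-1-i) + m ≤ N (a-1-i+1) := by
    intro i
    induction i with
    | zero =>
      intro _
      have e : a - 1 - 0 + 1 = a := by omega
      have e2 : a - 1 - 0 = a - 1 := by omega
      rw [e, e2]; exact hm
    | succ i ih =>
      intro hi
      have h1 := ih (by omega)
      have h2 := hF (a-1-(i+1))
      have e1 : a-1-(i+1)+2 = a-1-i+1 := by omega
      have e2 : a-1-(i+1)+1 = a-1-i := by omega
      rw [e1, e2] at h2
      rw [e2]
      omega
  have step' : ∀ k, k < a → N k + m ≤ N (k+1) := by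
    intro k hk
    have hs := step (a-1-k) (by omega)
    have e : a - 1 - (a-1-k) = k := by omega
    rw [e] at hs
    exact hs
  have main : ∀ j, j ≤ a → j * m ≤ N j := by
    intro j
    induction j with
    | zero => simp [h0]
    | succ j ih =>
      intro hj
      have h1 := step' j (by omega)
      have h2 := ih (by omega)
      have e : (j+1)*m = j*m + m := by ring
      omega
  exact main a le_rfl

section FrobeniusNull

variable {F V : Type*} [Field F] [AddCommGroup V] [Module F V] [FiniteDimensional F V]

private lemma frobenius_null (f : Module.End F V) (k : ℕ) :
    finrank F (LinearMap.ker (f ^ (k+2))) + finrank F (LinearMap.ker (f ^ k))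
      ≤ 2 * finrank F (LinearMap.ker (f ^ (k+1))) := by
  set K2 := LinearMap.ker (f ^ (k+2)) with hK2
  set q : V →ₗ[F] V ⧸ LinearMap.ker (f ^ k) := (LinearMap.ker (f ^ k)).mkQ with hq
  set ψ : K2 →ₗ[F] V ⧸ LinearMap.ker (f ^ k) := q ∘ₗ (f ∘ₗ K2.subtype) with hψ
  have hle1 : LinearMap.ker (f ^ (k+1)) ≤ K2 := f.iterateKer.monotone (by omega)
  have hle0 : LinearMap.ker (f ^ k) ≤ LinearMap.ker (f ^ (k+1)) := f.iterateKer.monotone (by omega)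
  have happ1 : ∀ v : V, (f ^ (k+1)) v = (f ^ k) (f v) := by
    intro v; rw [pow_succ]; rfl
  have happ2 : ∀ v : V, (f ^ (k+2)) v = (f ^ (k+1)) (f v) := by
    intro v; rw [pow_succ]; rfl
  have hkerψ : LinearMap.ker ψ = (LinearMap.ker (f ^ (k+1))).comap K2.subtype := by
    ext v
    simp only [hψ, LinearMap.mem_ker, LinearMap.comp_apply, Submodule.mem_comap,
      Submodule.subtype_apply, hq, Submodule.mkQ_apply, Submodule.Quotient.mk_eq_zero,
      LinearMap.mem_ker, happ1 (v : V)]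
  have hfk : finrank F (LinearMap.ker ψ) = finrank F (LinearMap.ker (f ^ (k+1))) := by
    rw [hkerψ]
    exact LinearEquiv.finrank_eq (Submodule.comapSubtypeEquivOfLe hle1)
  have hrange : LinearMap.range ψ ≤ (LinearMap.ker (f ^ (k+1))).map q := by
    rintro x ⟨v, rfl⟩
    refine ⟨f (v : V), ?_, rfl⟩
    show f (v : V) ∈ LinearMap.ker (f ^ (k+1))
    rw [LinearMap.mem_ker, ← happ2]
    exact v.2
  have hmap : finrank F ((LinearMap.ker (f ^ (k+1))).map q) + finrank F (LinearMap.ker (f ^ k))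
      = finrank F (LinearMap.ker (f ^ (k+1))) := by
    have h1 := LinearMap.finrank_range_add_finrank_ker (q ∘ₗ (LinearMap.ker (f ^ (k+1))).subtype)
    have h2 : LinearMap.range (q ∘ₗ (LinearMap.ker (f ^ (k+1))).subtype)
        = (LinearMap.ker (f ^ (k+1))).map q := by
      rw [LinearMap.range_comp, Submodule.range_subtype]
    have h3 : LinearMap.ker (q ∘ₗ (LinearMap.ker (f ^ (k+1))).subtype)
        = (LinearMap.ker (f ^ k)).comap (LinearMap.ker (f ^ (k+1))).subtype := by
      rw [LinearMap.ker_comp, hq, Submodule.ker_mkQ]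
    rw [h2, h3, LinearEquiv.finrank_eq (Submodule.comapSubtypeEquivOfLe hle0)] at h1
    exact h1
  have hrn := LinearMap.finrank_range_add_finrank_ker ψ
  have hrle : finrank F (LinearMap.range ψ) ≤ finrank F ((LinearMap.ker (f ^ (k+1))).map q) :=
    Submodule.finrank_mono hrange
  omega

private lemma sum_finrank_le_of_iSupIndep {ι : Type*} [DecidableEq ι] (s : Finset ι)
    (p : ι → Submodule F V) (h : iSupIndep p) :
    ∑ i ∈ s, finrank F (p i) ≤ finrank F V := by
  have key : ∀ s : Finset ι, ∑ i ∈ s, finrank F (p i) ≤ finrank F (s.sup p : Submodule F V) := by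
    intro s
    induction s using Finset.induction with
    | empty => simp
    | @insert a s ha ih =>
      rw [Finset.sum_insert ha, Finset.sup_insert]
      have hdisj : Disjoint (p a) (s.sup p) := by
        have hd := h.disjoint_biSup (y := (s : Set ι)) (by simpa using ha)
        simpa [Finset.sup_eq_iSup] using hd
      have heq := Submodule.finrank_sup_add_finrank_inf_eq (p a) (s.sup p)
      rw [hdisj.eq_bot] at heq
      simp only [finrank_bot, add_zero] at heq
      omega
  exact (key s).trans (Submodule.finrank_le _)

private lemma strict_ker_increase (f : Module.End F V) (μ : F)
    (ha : 0 < (minpoly F f).rootMultiplicity μ) :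
    finrank F (LinearMap.ker ((f - μ • 1) ^ ((minpoly F f).rootMultiplicity μ - 1))) + 1
      ≤ finrank F (LinearMap.ker ((f - μ • 1) ^ (minpoly F f).rootMultiplicity μ)) := by
  set a := (minpoly F f).rootMultiplicity μ with haa
  have hint : IsIntegral F f := Algebra.IsIntegral.isIntegral f
  have hP0 : minpoly F f ≠ 0 := minpoly.ne_zero hint
  obtain ⟨c, hc, hndvd⟩ := (minpoly F f).exists_eq_pow_rootMultiplicity_mul_and_not_dvd hP0 μ
  have hc0 : c ≠ 0 := by
    rintro rfl; rw [mul_zero] at hc; exact hP0 hc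
  set p : F[X] := (X - C μ) ^ (a - 1) * c with hp
  have hp0 : p ≠ 0 := mul_ne_zero (pow_ne_zero _ (X_sub_C_ne_zero μ)) hc0
  have hdeg : p.natDegree < (minpoly F f).natDegree := by
    rw [hc, hp, natDegree_mul (pow_ne_zero _ (X_sub_C_ne_zero μ)) hc0,
      natDegree_mul (pow_ne_zero _ (X_sub_C_ne_zero μ)) hc0,
      natDegree_pow, natDegree_pow, natDegree_X_sub_C]
    omega
  have haev : aeval f p ≠ 0 := by
    intro hz
    have hdvd := minpoly.dvd F f hz
    exact absurd (natDegree_le_of_dvd hdvd hp0) (by omega)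
  have hXsub : aeval f (X - C μ) = f - μ • 1 := by
    rw [map_sub, aeval_X, aeval_C, Algebra.algebraMap_eq_smul_one]
  obtain ⟨v, hv⟩ : ∃ v : V, (aeval f p) v ≠ 0 := by
    by_contra hall
    push_neg at hall
    exact haev (LinearMap.ext hall)
  set w := (aeval f c) v with hw
  have hw1 : ((f - μ • 1) ^ (a - 1)) w ≠ 0 := by
    have he : ((f - μ • 1) ^ (a - 1)) w = (aeval f p) v := by
      rw [hp, _root_.map_mul, map_pow, hXsub, hw]; rfl
    rw [he]; exact hv
  have hw2 : ((f - μ • 1) ^ a) w = 0 := by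
    have he : ((f - μ • 1) ^ a) w = (aeval f (minpoly F f)) v := by
      rw [hc, _root_.map_mul, map_pow, hXsub, hw]; rfl
    rw [he, minpoly.aeval]; rfl
  have hlt : LinearMap.ker ((f - μ • 1) ^ (a - 1)) < LinearMap.ker ((f - μ • 1) ^ a) := by
    refine lt_of_le_of_ne ((f - μ • 1).iterateKer.monotone (by omega)) ?_
    intro he
    have hmem : w ∈ LinearMap.ker ((f - μ • 1) ^ (a - 1)) := by
      rw [he]; exact hw2
    exact hw1 hmem
  have := Submodule.finrank_lt_finrank_of_lt hlt
  omega

end FrobeniusNull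

theorem exists_eigenvalue_at_most_two_maximal_jordan_blocks
    (F : Type*) [Field F] [IsAlgClosed F] (n : ℕ)
    (A : Matrix (Fin n) (Fin n) F) (d : ℕ)
    (hd : (minpoly F A).natDegree = d) (h1 : 2 * d ≤ n) (h2 : n + 1 ≤ 3 * d) :
    ∃ lam ∈ spectrum F A,
      Matrix.rank ((A - lam • (1 : Matrix (Fin n) (Fin n) F)) ^
            (minpoly F A).rootMultiplicity lam) + 1 ≤
          Matrix.rank ((A - lam • (1 : Matrix (Fin n) (Fin n) F)) ^
            ((minpoly F A).rootMultiplicity lam - 1)) ∧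
        Matrix.rank ((A - lam • (1 : Matrix (Fin n) (Fin n) F)) ^
            ((minpoly F A).rootMultiplicity lam - 1)) ≤
          Matrix.rank ((A - lam • (1 : Matrix (Fin n) (Fin n) F)) ^
            (minpoly F A).rootMultiplicity lam) + 2 := by
  classical
  set f : Module.End F (Fin n → F) := Matrix.toLin' A with hf
  have hminf : minpoly F f = minpoly F A := Matrix.minpoly_toLin' A
  have hP0 : minpoly F A ≠ 0 := minpoly.ne_zero (Matrix.isIntegral A)
  have htlpow : ∀ (M : Matrix (Fin n) (Fin n) F) (k : ℕ),
      Matrix.toLin' (M ^ k) = (Matrix.toLin' M) ^ k := by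
    intro M k
    induction k with
    | zero => rw [pow_zero, pow_zero, Matrix.toLin'_one, Module.End.one_eq_id]
    | succ k ih => rw [pow_succ, pow_succ, Matrix.toLin'_mul, ih, Module.End.mul_eq_comp]
  have htsub : ∀ lam : F, Matrix.toLin' (A - lam • 1) = f - lam • 1 := by
    intro lam
    rw [map_sub, _root_.map_smul, Matrix.toLin'_one, Module.End.one_eq_id]
  have hrank : ∀ (lam : F) (k : ℕ),
      Matrix.rank ((A - lam • 1) ^ k)
        + finrank F (LinearMap.ker ((f - lam • 1) ^ k)) = n := by
    intro lam k
    have h1' : Matrix.rank ((A - lam • 1) ^ k)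
        = finrank F (LinearMap.range ((f - lam • 1) ^ k)) := by
      rw [show ((f - lam • 1) ^ k) = Matrix.toLin' ((A - lam • 1) ^ k) by
        rw [htlpow, htsub]]
      rw [Matrix.toLin'_apply']
      rfl
    rw [h1', LinearMap.finrank_range_add_finrank_ker, Module.finrank_fin_fun]
  have hN0 : ∀ lam : F, finrank F (LinearMap.ker ((f - lam • 1) ^ 0)) = 0 := by
    intro lam
    rw [pow_zero, Module.End.one_eq_id, LinearMap.ker_id]
    exact finrank_bot F _
  set s := (minpoly F A).roots.toFinset with hs
  have hmem_s : ∀ lam ∈ s, 0 < (minpoly F A).rootMultiplicity lam := by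
    intro lam hlam
    rw [hs, Multiset.mem_toFinset, mem_roots hP0] at hlam
    exact (rootMultiplicity_pos hP0).mpr hlam
  have hspec : ∀ lam ∈ s, lam ∈ spectrum F A := by
    intro lam hlam
    rw [hs, Multiset.mem_toFinset, mem_roots hP0] at hlam
    have h1' : Module.End.HasEigenvalue f lam :=
      Module.End.hasEigenvalue_of_isRoot (by rwa [hminf])
    have h2' : lam ∈ spectrum F f := Module.End.hasEigenvalue_iff_mem_spectrum.mp h1'
    rwa [show spectrum F f = spectrum F A from AlgEquiv.spectrum_eq Matrix.toLinAlgEquiv' A]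
      at h2'
  have hsum : ∑ lam ∈ s, (minpoly F A).rootMultiplicity lam = d := by
    calc ∑ lam ∈ s, (minpoly F A).rootMultiplicity lam
        = ∑ lam ∈ s, (minpoly F A).roots.count lam :=
          Finset.sum_congr rfl fun lam _ => (count_roots _).symm
      _ = Multiset.card (minpoly F A).roots := Multiset.toFinset_sum_count_eq _
      _ = d := (splits_iff_card_roots.mp (IsAlgClosed.splits _)).trans hd
  have hkey1 : ∀ lam ∈ s,
      finrank F (LinearMap.ker ((f - lam • 1) ^ ((minpoly F A).rootMultiplicity lam - 1))) + 1
        ≤ finrank F (LinearMap.ker ((f - lam • 1) ^ ((minpoly F A).rootMultiplicity lam))) := by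
    intro lam hlam
    have hst := strict_ker_increase f lam (by rw [hminf]; exact hmem_s lam hlam)
    rwa [hminf] at hst
  by_contra hcon
  push_neg at hcon
  have hkey3 : ∀ lam ∈ s,
      finrank F (LinearMap.ker ((f - lam • 1) ^ ((minpoly F A).rootMultiplicity lam - 1))) + 3
        ≤ finrank F (LinearMap.ker ((f - lam • 1) ^ ((minpoly F A).rootMultiplicity lam))) := by
    intro lam hlam
    have hr1 := hrank lam ((minpoly F A).rootMultiplicity lam)
    have hr2 := hrank lam ((minpoly F A).rootMultiplicity lam - 1)
    have hk1 := hkey1 lam hlam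
    have hfirst : Matrix.rank ((A - lam • 1) ^ ((minpoly F A).rootMultiplicity lam)) + 1
        ≤ Matrix.rank ((A - lam • 1) ^ ((minpoly F A).rootMultiplicity lam - 1)) := by
      omega
    have hlt := hcon lam (hspec lam hlam) hfirst
    omega
  have hmult : ∀ lam ∈ s,
      (minpoly F A).rootMultiplicity lam * 3
        ≤ finrank F (LinearMap.ker ((f - lam • 1) ^ ((minpoly F A).rootMultiplicity lam))) := by
    intro lam hlam
    exact nat_mult_aux (fun k => finrank F (LinearMap.ker ((f - lam • 1) ^ k))) _ 3
      (hmem_s lam hlam) (hN0 lam) (fun k => frobenius_null (f - lam • 1) k) (hkey3 lam hlam)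
  have hbound : ∑ lam ∈ s,
      finrank F (LinearMap.ker ((f - lam • 1) ^ ((minpoly F A).rootMultiplicity lam))) ≤ n := by
    have hind : iSupIndep (f.genEigenspace · (⊤ : ℕ∞)) :=
      Module.End.independent_genEigenspace f ⊤
    have hle : ∀ lam ∈ s,
        finrank F (LinearMap.ker ((f - lam • 1) ^ ((minpoly F A).rootMultiplicity lam)))
          ≤ finrank F (f.genEigenspace lam (⊤ : ℕ∞)) := by
      intro lam _
      apply Submodule.finrank_mono
      rw [show LinearMap.ker ((f - lam • 1) ^ ((minpoly F A).rootMultiplicity lam))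
          = f.genEigenspace lam (((minpoly F A).rootMultiplicity lam : ℕ) : ℕ∞) from
        (Module.End.genEigenspace_nat).symm]
      exact (f.genEigenspace lam).monotone le_top
    calc ∑ lam ∈ s, finrank F (LinearMap.ker ((f - lam • 1) ^ ((minpoly F A).rootMultiplicity lam)))
        ≤ ∑ lam ∈ s, finrank F (f.genEigenspace lam (⊤ : ℕ∞)) := Finset.sum_le_sum hle
      _ ≤ finrank F (Fin n → F) := sum_finrank_le_of_iSupIndep s _ hind
      _ = n := Module.finrank_fin_fun F
  have hfinal : 3 * d ≤ n := by
    calc 3 * d = ∑ lam ∈ s, (minpoly F A).rootMultiplicity lam * 3 := by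
          rw [← Finset.sum_mul, hsum]; ring
      _ ≤ ∑ lam ∈ s, finrank F (LinearMap.ker ((f - lam • 1) ^ ((minpoly F A).rootMultiplicity lam))) :=
          Finset.sum_le_sum hmult
      _ ≤ n := hbound
  omega
end

section
/- Let F be an algebraically closed field and let A be an n×n matrix over F whose minimal polynomial has degree d with 2d ≤ n ≤ 3d − 1. Then there exists a polynomial p ∈ F[X] of degree at most d − 1 such that 1 ≤ rank(p(A)) ≤ 2. -/
open Polynomial Matrix Module

section Aux

variable {F V : Type*} [Field F] [AddCommGroup V] [Module F V] [FiniteDimensional F V]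

/-- Sum of finranks of an independent family of submodules over a finset is at most
the dimension of the whole space. -/
lemma aux_indep_sum_finrank_le {ι : Type*} (f : ι → Submodule F V) (hf : iSupIndep f)
    (s : Finset ι) : ∑ i ∈ s, finrank F (f i) ≤ finrank F V := by
  classical
  have key : ∀ s : Finset ι, ∑ i ∈ s, finrank F (f i) ≤ finrank F ↥(s.sup f) := by
    intro s
    induction s using Finset.induction_on with
    | empty => simp
    | @insert a s ha ih =>
      have hdisj : Disjoint (f a) (s.sup f) := by
        refine (hf a).mono_right ?_
        refine Finset.sup_le fun i hi => ?_
        have hia : i ≠ a := fun h => ha (h ▸ hi)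
        exact le_iSup₂ (f := fun b (_ : b ≠ a) => f b) i hia
      have heq := Submodule.finrank_sup_add_finrank_inf_eq (f a) (s.sup f)
      rw [hdisj.eq_bot, finrank_bot, add_zero] at heq
      rw [Finset.sum_insert ha, Finset.sup_insert, heq]
      omega
  exact (key s).trans (Submodule.finrank_le _)

/-- Rank-nullity step: the jump in nullity of powers equals the dimension of
`ker N ⊓ range N^j`. -/
lemma aux_ker_pow_succ (N : Module.End F V) (j : ℕ) :
    finrank F (LinearMap.ker (N ^ (j + 1))) =
      finrank F (LinearMap.ker (N ^ j)) +
        finrank F (LinearMap.ker N ⊓ LinearMap.range (N ^ j) : Submodule F V) := by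
  set g := (N ^ j).domRestrict (LinearMap.ker (N ^ (j + 1))) with hg
  have hrange : LinearMap.range g = LinearMap.ker N ⊓ LinearMap.range (N ^ j) := by
    rw [hg, LinearMap.range_domRestrict]
    ext x
    simp only [Submodule.mem_map, LinearMap.mem_ker, Submodule.mem_inf, LinearMap.mem_range]
    constructor
    · rintro ⟨y, hy, rfl⟩
      refine ⟨?_, y, rfl⟩
      have : (N ^ (j + 1)) y = 0 := hy
      rw [pow_succ'] at this
      exact this
    · rintro ⟨hx, y, rfl⟩
      refine ⟨y, ?_, rfl⟩
      show (N ^ (j + 1)) y = 0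
      rw [pow_succ']
      exact hx
  have hker : LinearMap.ker g =
      Submodule.comap (LinearMap.ker (N ^ (j + 1))).subtype (LinearMap.ker (N ^ j)) := by
    ext x
    simp [hg, LinearMap.mem_ker]
  have hle : LinearMap.ker (N ^ j) ≤ LinearMap.ker (N ^ (j + 1)) := by
    intro x hx
    show (N ^ (j + 1)) x = 0
    rw [pow_succ']
    simp only [LinearMap.mem_ker] at hx
    show N ((N ^ j) x) = 0
    rw [hx, map_zero]
  have hkerrank : finrank F (LinearMap.ker g) = finrank F (LinearMap.ker (N ^ j)) := by
    rw [hker]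
    exact (Submodule.comapSubtypeEquivOfLe hle).finrank_eq
  have hrn := LinearMap.finrank_range_add_finrank_ker g
  rw [hrange, hkerrank] at hrn
  omega

/-- Lower bound for nullity of a power. -/
lemma aux_ker_pow_ge (N : Module.End F V) (m c : ℕ)
    (h : ∀ j, j < m → c ≤ finrank F (LinearMap.ker N ⊓ LinearMap.range (N ^ j) : Submodule F V)) :
    m * c ≤ finrank F (LinearMap.ker (N ^ m)) := by
  induction m with
  | zero => simp
  | succ m ih =>
    have h1 := aux_ker_pow_succ N m
    have h2 := ih (fun j hj => h j (by omega))
    have h3 := h m (by omega)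
    have : (m + 1) * c = m * c + c := by ring
    omega

end Aux

theorem exists_poly_rank_le_two_of_minpoly_deg_between
    (F : Type*) [Field F] [IsAlgClosed F] (n : ℕ)
    (A : Matrix (Fin n) (Fin n) F) (d : ℕ)
    (hd : (minpoly F A).natDegree = d) (h1 : 2 * d ≤ n) (h2 : n + 1 ≤ 3 * d) :
    ∃ p : F[X], p.natDegree ≤ d - 1 ∧
      1 ≤ Matrix.rank (Polynomial.aeval A p) ∧ Matrix.rank (Polynomial.aeval A p) ≤ 2 := by
  classical
  set μ : F[X] := minpoly F A with hμ
  have hint : IsIntegral F A := Algebra.IsIntegral.isIntegral A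
  have hμ0 : μ ≠ 0 := minpoly.ne_zero hint
  have hd1 : 1 ≤ d := by omega
  -- the linear map side
  set e : Matrix (Fin n) (Fin n) F ≃ₐ[F] ((Fin n → F) →ₗ[F] (Fin n → F)) :=
    Matrix.toLinAlgEquiv' with he
  set f : Module.End F (Fin n → F) := e A with hf
  have hcoe : ∀ B : Matrix (Fin n) (Fin n) F, (e B : (Fin n → F) →ₗ[F] (Fin n → F)) = B.mulVecLin := by
    intro B
    ext v
    simp [he, Matrix.toLinAlgEquiv'_apply, Matrix.mulVecLin_apply]
  have haev : ∀ p : F[X], Polynomial.aeval f p = e (Polynomial.aeval A p) := by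
    intro p
    exact Polynomial.aeval_algHom_apply e.toAlgHom A p
  -- roots of the minimal polynomial
  have hsplit : μ.Splits := IsAlgClosed.splits μ
  have hcard : Multiset.card μ.roots = d := by
    have := Polynomial.Splits.natDegree_eq_card_roots hsplit
    rw [hd] at this
    exact this.symm
  have hsumroots : ∑ l ∈ μ.roots.toFinset, rootMultiplicity l μ = d := by
    have := Multiset.toFinset_sum_count_eq μ.roots
    rw [hcard] at this
    rw [← this]
    exact Finset.sum_congr rfl fun l _ => by rw [Polynomial.count_roots]
  -- key claim : some root has few maximal Jordan blocks
  have key : ∃ l ∈ μ.roots.toFinset,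
      finrank F (LinearMap.ker (f - l • 1) ⊓
        LinearMap.range ((f - l • 1) ^ (rootMultiplicity l μ - 1)) :
          Submodule F (Fin n → F)) ≤ 2 := by
    by_contra hcon
    push_neg at hcon
    have hb : ∀ l ∈ μ.roots.toFinset,
        3 * rootMultiplicity l μ ≤
          finrank F (LinearMap.ker ((f - l • 1) ^ rootMultiplicity l μ)) := by
      intro l hl
      set m := rootMultiplicity l μ with hm
      set N : Module.End F (Fin n → F) := f - l • 1 with hN
      have hge3 : ∀ j, j < m → 3 ≤
          finrank F (LinearMap.ker N ⊓ LinearMap.range (N ^ j) : Submodule F (Fin n → F)) := by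
        intro j hj
        have hrle : LinearMap.range (N ^ (m - 1)) ≤ LinearMap.range (N ^ j) := by
          rw [show m - 1 = j + (m - 1 - j) by omega, pow_add]
          exact LinearMap.range_comp_le_range _ _
        have hmono : (LinearMap.ker N ⊓ LinearMap.range (N ^ (m - 1)) : Submodule F (Fin n → F)) ≤
            LinearMap.ker N ⊓ LinearMap.range (N ^ j) := inf_le_inf_left _ hrle
        have hc3 : 2 < finrank F
            (LinearMap.ker N ⊓ LinearMap.range (N ^ (m - 1)) : Submodule F (Fin n → F)) :=
          hcon l hl
        have := Submodule.finrank_mono hmono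
        omega
      have := aux_ker_pow_ge N m 3 hge3
      omega
    -- each kernel lands in a generalized eigenspace
    have hker_le : ∀ l : F,
        finrank F (LinearMap.ker ((f - l • 1) ^ rootMultiplicity l μ)) ≤
          finrank F (f.genEigenspace l ⊤) := by
      intro l
      refine Submodule.finrank_mono ?_
      intro x hx
      exact Module.End.mem_genEigenspace_top.mpr ⟨rootMultiplicity l μ, hx⟩
    have hsum := aux_indep_sum_finrank_le (fun l : F => f.genEigenspace l ⊤)
      (f.independent_genEigenspace ⊤) μ.roots.toFinset
    have hfr : finrank F (Fin n → F) = n := by simp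
    rw [hfr] at hsum
    have h3d : 3 * d ≤ ∑ l ∈ μ.roots.toFinset, finrank F (f.genEigenspace l ⊤) := by
      calc 3 * d = ∑ l ∈ μ.roots.toFinset, 3 * rootMultiplicity l μ := by
            rw [← Finset.mul_sum, hsumroots]
        _ ≤ _ := Finset.sum_le_sum fun l hl => (hb l hl).trans (hker_le l)
    omega
  obtain ⟨l, hlmem, hl2⟩ := key
  set m := rootMultiplicity l μ with hm
  have hroot : μ.IsRoot l := Polynomial.isRoot_of_mem_roots (Multiset.mem_toFinset.mp hlmem)
  have hm1 : 1 ≤ m := (Polynomial.rootMultiplicity_pos hμ0).mpr hroot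
  obtain ⟨q, hq⟩ := Polynomial.pow_rootMultiplicity_dvd μ l
  have hq0 : q ≠ 0 := by
    intro h
    rw [h, mul_zero] at hq
    exact hμ0 hq
  set p : F[X] := (X - C l) ^ (m - 1) * q with hp
  have hp0 : p ≠ 0 := mul_ne_zero (pow_ne_zero _ (Polynomial.X_sub_C_ne_zero l)) hq0
  have hdegμ : m + q.natDegree = d := by
    have := Polynomial.natDegree_mul (pow_ne_zero m (Polynomial.X_sub_C_ne_zero l)) hq0
    rw [← hq, hd, Polynomial.natDegree_pow, Polynomial.natDegree_X_sub_C, mul_one] at this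
    omega
  have hdegp : p.natDegree = d - 1 := by
    rw [hp, Polynomial.natDegree_mul (pow_ne_zero _ (Polynomial.X_sub_C_ne_zero l)) hq0,
      Polynomial.natDegree_pow, Polynomial.natDegree_X_sub_C, mul_one]
    omega
  have hfact : μ = (X - C l) * p := by
    rw [hp, ← mul_assoc, ← pow_succ', show m - 1 + 1 = m by omega, ← hq]
  -- p(A) ≠ 0
  have hpA : Polynomial.aeval A p ≠ 0 := by
    intro h0
    have hdvd : μ ∣ p := minpoly.dvd F A h0
    have := Polynomial.natDegree_le_of_dvd hdvd hp0
    rw [hd, hdegp] at this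
    omega
  refine ⟨p, le_of_eq hdegp, ?_, ?_⟩
  · -- rank ≥ 1
    rw [Nat.one_le_iff_ne_zero]
    intro h0
    apply hpA
    have hrange0 : LinearMap.range (Polynomial.aeval A p).mulVecLin = ⊥ :=
      Submodule.finrank_eq_zero.mp h0
    have hlin0 : (Polynomial.aeval A p).mulVecLin = 0 := LinearMap.range_eq_bot.mp hrange0
    apply e.injective
    rw [hcoe, hlin0, map_zero]
  · -- rank ≤ 2
    have hrank : Matrix.rank (Polynomial.aeval A p) =
        finrank F (LinearMap.range (Polynomial.aeval f p)) := by
      rw [haev p, hcoe]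
      rfl
    rw [hrank]
    refine le_trans (Submodule.finrank_mono ?_) hl2
    -- range aeval f p ≤ ker (f - l•1) ⊓ range ((f - l•1)^(m-1))
    have hXC : Polynomial.aeval f (X - C l) = f - l • 1 := by
      simp [Module.algebraMap_end_eq_smul_id, Module.End.one_eq_id]
    rintro x ⟨y, rfl⟩
    constructor
    · -- kernel part
      have hzero : (f - l • 1) * Polynomial.aeval f p = 0 := by
        rw [← hXC, ← _root_.map_mul, ← hfact, haev, hμ, minpoly.aeval, map_zero]
      show (f - l • 1) ((Polynomial.aeval f p) y) = 0
      have := congrFun (congrArg (fun g : Module.End F (Fin n → F) => (g : _ → _)) hzero) y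
      simpa using this
    · -- range part
      have hsplit : Polynomial.aeval f p = (f - l • 1) ^ (m - 1) * Polynomial.aeval f q := by
        rw [hp, _root_.map_mul, _root_.map_pow, hXC]
      refine ⟨Polynomial.aeval f q y, ?_⟩
      rw [hsplit]
      rfl
end

section
/- Let A be a finite-dimensional unital associative algebra over a field F, let a₁, …, a_k ∈ A be such that S = {a₁, …, a_k} is a generating system of A, and let C = (c_{ij}) ∈ M_k(F) be an invertible matrix. Set S_C = {c_{11}a₁ + c_{12}a₂ + ⋯ + c_{1k}a_k, …, c_{k1}a₁ + c_{k2}a₂ + ⋯ + c_{kk}a_k}. Then S_C is a generating system of A and ℓ(S_C) = ℓ(S). -/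
open Polynomial Matrix

/-- The `F`-linear span of all words over `S` of length at most `i`
(the empty word being `1`). -/
def wordSpan (F : Type*) {A : Type*} [Field F] [Ring A] [Algebra F A]
    (S : Set A) (i : ℕ) : Submodule F A :=
  Submodule.span F {x : A | ∃ l : List A, l.length ≤ i ∧ (∀ a ∈ l, a ∈ S) ∧ l.prod = x}

/-- `S` is a generating system of the algebra `A`:
`A` is the union of the subspaces `wordSpan F S i`. -/
def IsGeneratingSystem (F : Type*) {A : Type*} [Field F] [Ring A] [Algebra F A]
    (S : Set A) : Prop :=
  ∀ x : A, ∃ i : ℕ, x ∈ wordSpan F S i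

/-- The length of a generating system `S`: the least `k` with `wordSpan F S k = ⊤`. -/
noncomputable def genLength (F : Type*) {A : Type*} [Field F] [Ring A] [Algebra F A]
    (S : Set A) : ℕ :=
  sInf {k : ℕ | wordSpan F S k = ⊤}

lemma wordSpan_mono {F : Type*} {A : Type*} [Field F] [Ring A] [Algebra F A]
    {S : Set A} {i j : ℕ} (h : i ≤ j) : wordSpan F S i ≤ wordSpan F S j := by
  apply Submodule.span_mono
  rintro x ⟨l, hl, hmem, hprod⟩
  exact ⟨l, hl.trans h, hmem, hprod⟩

lemma mul_mem_wordSpan {F : Type*} {A : Type*} [Field F] [Ring A] [Algebra F A]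
    {S : Set A} {n : ℕ} {y x : A} (hy : y ∈ Submodule.span F S)
    (hx : x ∈ wordSpan F S n) : y * x ∈ wordSpan F S (n + 1) := by
  induction hy using Submodule.span_induction with
  | mem s hs =>
    induction hx using Submodule.span_induction with
    | mem z hz =>
      obtain ⟨l, hl, hmem, rfl⟩ := hz
      refine Submodule.subset_span ⟨s :: l, ?_, ?_, ?_⟩
      · simpa using Nat.succ_le_succ hl
      · intro b hb
        rcases List.mem_cons.mp hb with rfl | hb
        · exact hs
        · exact hmem b hb
      · simp
    | zero => simp
    | add u v _ _ hu hv => rw [mul_add]; exact (wordSpan F S (n+1)).add_mem hu hv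
    | smul c u _ hu => rw [mul_smul_comm]; exact (wordSpan F S (n+1)).smul_mem c hu
  | zero => simp
  | add u v _ _ hu hv => rw [add_mul]; exact (wordSpan F S (n+1)).add_mem hu hv
  | smul c u _ hu => rw [smul_mul_assoc]; exact (wordSpan F S (n+1)).smul_mem c hu

lemma wordSpan_le_of_subset_span {F : Type*} {A : Type*} [Field F] [Ring A] [Algebra F A]
    {S T : Set A} (h : T ⊆ (Submodule.span F S : Submodule F A)) (i : ℕ) :
    wordSpan F T i ≤ wordSpan F S i := by
  apply Submodule.span_le.mpr
  rintro x ⟨l, hl, hmem, rfl⟩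
  have key : ∀ l : List A, (∀ b ∈ l, b ∈ Submodule.span F S) →
      l.prod ∈ wordSpan F S l.length := by
    intro l
    induction l with
    | nil => intro _; exact Submodule.subset_span ⟨[], by simp, by simp, by simp⟩
    | cons b t ih =>
      intro hb
      have := mul_mem_wordSpan (hb b (by simp)) (ih fun c hc => hb c (by simp [hc]))
      simpa using this
  exact wordSpan_mono hl (key l fun b hb => h (hmem b hb))

theorem genLength_invariant_under_invertible_transform
    (F : Type*) [Field F] (A : Type*) [Ring A] [Algebra F A] [FiniteDimensional F A]
    (k : ℕ) (a : Fin k → A)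
    (hgen : IsGeneratingSystem F (Set.range a))
    (C : Matrix (Fin k) (Fin k) F) (hC : IsUnit C) :
    IsGeneratingSystem F (Set.range fun i => ∑ j, C i j • a j) ∧
      genLength F (Set.range fun i => ∑ j, C i j • a j) = genLength F (Set.range a) := by
  set b : Fin k → A := fun i => ∑ j, C i j • a j with hb
  have := hC.invertible
  have hba : Set.range b ⊆ (Submodule.span F (Set.range a) : Submodule F A) := by
    rintro _ ⟨i, rfl⟩
    exact Submodule.sum_mem _ fun j _ =>
      Submodule.smul_mem _ _ (Submodule.subset_span ⟨j, rfl⟩)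
  have hab : Set.range a ⊆ (Submodule.span F (Set.range b) : Submodule F A) := by
    rintro _ ⟨j, rfl⟩
    have key : a j = ∑ i, (⅟C) j i • b i := by
      have h1 : (⅟C * C) = (1 : Matrix (Fin k) (Fin k) F) := invOf_mul_self C
      calc a j = ∑ m, (1 : Matrix (Fin k) (Fin k) F) j m • a m := by
            simp [Matrix.one_apply]
        _ = ∑ m, (∑ i, (⅟C) j i * C i m) • a m := by
            rw [← h1]; simp [Matrix.mul_apply]
        _ = ∑ m, ∑ i, ((⅟C) j i * C i m) • a m := by
            simp [Finset.sum_smul]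
        _ = ∑ i, ∑ m, ((⅟C) j i * C i m) • a m := Finset.sum_comm
        _ = ∑ i, (⅟C) j i • b i := by
            simp [hb, Finset.smul_sum, mul_smul]
    rw [key]
    exact Submodule.sum_mem _ fun i _ =>
      Submodule.smul_mem _ _ (Submodule.subset_span ⟨i, rfl⟩)
  have heq : ∀ n, wordSpan F (Set.range b) n = wordSpan F (Set.range a) n := fun n =>
    le_antisymm (wordSpan_le_of_subset_span hba n) (wordSpan_le_of_subset_span hab n)
  constructor
  · intro x
    obtain ⟨i, hi⟩ := hgen x
    exact ⟨i, (heq i).symm ▸ hi⟩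
  · unfold genLength
    congr 1
    ext n
    simp [heq n]
end
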